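/- The 1-Wasserstein distance between two univariate Gaussians N(μ₁,σ₁²) and N(μ₂,σ₂²) with σ₁ ≠ σ₂ equals |μ_y|(1 − 2Φ(−|μ_y|/|σ_y|)) + |σ_y|√(2/π)·exp(−μ_y²/(2σ_y²)), where μ_y = μ₁ − μ₂ and σ_y = σ₁ − σ₂. -/

import Mathlib

open MeasureTheory Set Real

noncomputable def stdNormalCDF (x : ℝ) : ℝ :=
  ∫ t in Iic x, (1 / Real.sqrt (2 * π)) * Real.exp (-t ^ 2 / 2)

open Filter Topology

noncomputable def stdPdf (t : ℝ) : ℝ := (1 / Real.sqrt (2 * π)) * Real.exp (-t ^ 2 / 2)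

lemma stdPdf_pos (t : ℝ) : 0 < stdPdf t := by
  have h : 0 < Real.sqrt (2 * π) := Real.sqrt_pos.2 (by positivity)
  exact mul_pos (by positivity) (Real.exp_pos _)

lemma stdPdf_cont : Continuous stdPdf := by
  unfold stdPdf; fun_prop

lemma exp_half_eq (t : ℝ) : Real.exp (-t ^ 2 / 2) = Real.exp (-(1/2) * t ^ 2) := by ring_nf

lemma stdPdf_integrable : Integrable stdPdf := by
  have h := integrable_exp_neg_mul_sq (by norm_num : (0:ℝ) < 1/2)
  have := h.const_mul (1 / Real.sqrt (2 * π))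
  refine this.congr ?_
  filter_upwards with t
  simp [stdPdf, exp_half_eq]

lemma mul_stdPdf_integrable : Integrable (fun t => t * stdPdf t) := by
  have h := integrable_mul_exp_neg_mul_sq (by norm_num : (0:ℝ) < 1/2)
  have := h.const_mul (1 / Real.sqrt (2 * π))
  refine this.congr ?_
  filter_upwards with t
  simp [stdPdf, exp_half_eq]; ring

lemma stdPdf_integral : ∫ t, stdPdf t = 1 := by
  have h : ∫ t : ℝ, Real.exp (-(1/2) * t ^ 2) = Real.sqrt (π / (1/2)) :=
    integral_gaussian (1/2)
  have h2 : ∫ t : ℝ, Real.exp (-t ^ 2 / 2) = Real.sqrt (2 * π) := by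
    simp_rw [exp_half_eq, h]
    rw [show π / (1/2 : ℝ) = 2 * π by ring]
  have hs : Real.sqrt (2 * π) ≠ 0 := ne_of_gt (Real.sqrt_pos.2 (by positivity))
  unfold stdPdf
  rw [integral_const_mul, h2]
  field_simp

lemma cdf_eq (x : ℝ) : stdNormalCDF x = ∫ t in Iic x, stdPdf t := rfl

lemma cdf_hasDeriv (x : ℝ) : HasDerivAt stdNormalCDF (stdPdf x) x := by
  have key : ∀ y, stdNormalCDF y = stdNormalCDF 0 + ∫ t in (0:ℝ)..y, stdPdf t := by
    intro y
    rw [cdf_eq, cdf_eq, ← intervalIntegral.integral_Iic_sub_Iic stdPdf_integrable.integrableOn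
      stdPdf_integrable.integrableOn]
    ring
  have h : HasDerivAt (fun y => stdNormalCDF 0 + ∫ t in (0:ℝ)..y, stdPdf t) (stdPdf x) x := by
    apply HasDerivAt.const_add
    exact intervalIntegral.integral_hasDerivAt_right
      (stdPdf_integrable.intervalIntegrable)
      (stdPdf_cont.stronglyMeasurable.stronglyMeasurableAtFilter)
      stdPdf_cont.continuousAt
  exact h.congr_of_eventuallyEq (Filter.Eventually.of_forall key)

lemma cdf_strictMono : StrictMono stdNormalCDF := by
  apply strictMono_of_deriv_pos
  intro x
  rw [(cdf_hasDeriv x).deriv]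
  exact stdPdf_pos x

lemma cdf_continuous : Continuous stdNormalCDF :=
  continuous_iff_continuousAt.2 fun x => (cdf_hasDeriv x).continuousAt

lemma cdf_nonneg (x : ℝ) : 0 ≤ stdNormalCDF x := by
  rw [cdf_eq]
  exact setIntegral_nonneg measurableSet_Iic fun t _ => (stdPdf_pos t).le

lemma cdf_le_one (x : ℝ) : stdNormalCDF x ≤ 1 := by
  rw [cdf_eq, ← stdPdf_integral]
  exact setIntegral_le_integral stdPdf_integrable
    (Filter.Eventually.of_forall fun t => (stdPdf_pos t).le)

lemma cdf_mem_Ioo (x : ℝ) : stdNormalCDF x ∈ Ioo (0:ℝ) 1 :=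
  ⟨lt_of_le_of_lt (cdf_nonneg (x-1)) (cdf_strictMono (by linarith)),
   lt_of_lt_of_le (cdf_strictMono (show x < x+1 by linarith)) (cdf_le_one (x+1))⟩

lemma cdf_tendsto_atTop : Tendsto stdNormalCDF atTop (𝓝 1) := by
  have : AECover (volume : Measure ℝ) atTop (fun i : ℝ => Iic i) :=
    aecover_Iic tendsto_id
  have := this.integral_tendsto_of_countably_generated stdPdf_integrable
  rw [stdPdf_integral] at this
  exact this.congr fun x => (cdf_eq x).symm

lemma cdf_tendsto_atBot : Tendsto stdNormalCDF atBot (𝓝 0) := by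
  have hcov : AECover (volume : Measure ℝ) atBot (fun i : ℝ => Ioi i) :=
    aecover_Ioi tendsto_id
  have hIoi := hcov.integral_tendsto_of_countably_generated stdPdf_integrable
  rw [stdPdf_integral] at hIoi
  have key : ∀ x : ℝ, stdNormalCDF x = 1 - ∫ t in Ioi x, stdPdf t := by
    intro x
    have := integral_add_compl (measurableSet_Iic (a := x)) stdPdf_integrable (f := stdPdf)
    rw [compl_Iic, stdPdf_integral] at this
    rw [cdf_eq]; linarith
  have h2 : Tendsto (fun x : ℝ => 1 - ∫ t in Ioi x, stdPdf t) atBot (𝓝 (1 - 1)) :=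
    (tendsto_const_nhds.sub hIoi)
  rw [show (1:ℝ) - 1 = 0 by ring] at h2
  exact h2.congr fun x => (key x).symm

lemma cdf_range : range stdNormalCDF = Ioo (0:ℝ) 1 := by
  apply Subset.antisymm
  · rintro _ ⟨x, rfl⟩; exact cdf_mem_Ioo x
  · rintro q ⟨hq0, hq1⟩
    obtain ⟨b, hb⟩ := (cdf_tendsto_atTop.eventually_const_lt hq1).exists
    obtain ⟨a, ha, hab⟩ := ((cdf_tendsto_atBot.eventually_lt_const hq0).and
      (eventually_le_atBot b)).exists
    have : q ∈ Icc (stdNormalCDF a) (stdNormalCDF b) := ⟨ha.le, hb.le⟩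
    obtain ⟨x, _, hx⟩ := intermediate_value_Icc hab cdf_continuous.continuousOn this
    exact ⟨x, hx⟩

lemma expF_hasDeriv (t : ℝ) :
    HasDerivAt (fun t : ℝ => -Real.exp (-t ^ 2 / 2)) (t * Real.exp (-t ^ 2 / 2)) t := by
  have h : HasDerivAt (fun t : ℝ => -t ^ 2 / 2) (-t) t := by
    have := ((hasDerivAt_pow 2 t).neg.div_const 2)
    simpa using this.congr_deriv (by push_cast; ring)
  have : HasDerivAt (fun t : ℝ => -Real.exp (-t ^ 2 / 2)) (-(Real.exp (-t ^ 2 / 2) * -t)) t :=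
    (h.exp).neg
  convert this using 1
  ring

lemma sq_tendsto_atBot : Tendsto (fun t : ℝ => t ^ 2) atBot atTop := by
  have h1 : Tendsto (fun t : ℝ => t ^ 2) atTop atTop := tendsto_pow_atTop two_ne_zero
  have := h1.comp tendsto_neg_atBot_atTop
  simpa [Function.comp_def, neg_sq] using this

lemma expF_tendsto_atBot :
    Tendsto (fun t : ℝ => -Real.exp (-t ^ 2 / 2)) atBot (𝓝 0) := by
  have h : Tendsto (fun t : ℝ => -t ^ 2 / 2) atBot atBot := by
    have := (sq_tendsto_atBot.atTop_mul_const_of_neg (show (-(1:ℝ)/2) < 0 by norm_num))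
    exact this.congr fun t => by ring
  have := (Real.tendsto_exp_atBot.comp h).neg
  simpa using this

lemma expF_tendsto_atTop :
    Tendsto (fun t : ℝ => -Real.exp (-t ^ 2 / 2)) atTop (𝓝 0) := by
  have h : Tendsto (fun t : ℝ => -t ^ 2 / 2) atTop atBot := by
    have := ((tendsto_pow_atTop (two_ne_zero)).atTop_mul_const_of_neg
      (show (-(1:ℝ)/2) < 0 by norm_num) : Tendsto (fun t : ℝ => t ^ 2 * (-1/2)) atTop atBot)
    exact this.congr fun t => by ring
  have := (Real.tendsto_exp_atBot.comp h).neg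
  simpa using this

lemma exp_mul_integrable : Integrable (fun t : ℝ => t * Real.exp (-t ^ 2 / 2)) := by
  have h := integrable_mul_exp_neg_mul_sq (by norm_num : (0:ℝ) < 1/2)
  refine h.congr ?_
  filter_upwards with t
  congr 1
  ring_nf

lemma integral_Iic_exp_mul (a : ℝ) :
    ∫ t in Iic a, t * Real.exp (-t ^ 2 / 2) = -Real.exp (-a ^ 2 / 2) := by
  have := integral_Iic_of_hasDerivAt_of_tendsto' (a := a)
    (fun x _ => expF_hasDeriv x) exp_mul_integrable.integrableOn expF_tendsto_atBot
  simpa using this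

lemma integral_Ioi_exp_mul (a : ℝ) :
    ∫ t in Ioi a, t * Real.exp (-t ^ 2 / 2) = Real.exp (-a ^ 2 / 2) := by
  have := integral_Ioi_of_hasDerivAt_of_tendsto' (a := a)
    (fun x _ => expF_hasDeriv x) exp_mul_integrable.integrableOn expF_tendsto_atTop
  simpa using this

lemma integral_Iic_mul_pdf (a : ℝ) :
    ∫ t in Iic a, t * stdPdf t = (1 / Real.sqrt (2 * π)) * (-Real.exp (-a ^ 2 / 2)) := by
  rw [← integral_Iic_exp_mul a, ← integral_const_mul]
  refine setIntegral_congr_fun measurableSet_Iic fun t _ => ?_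
  unfold stdPdf; ring

lemma integral_Ioi_mul_pdf (a : ℝ) :
    ∫ t in Ioi a, t * stdPdf t = (1 / Real.sqrt (2 * π)) * Real.exp (-a ^ 2 / 2) := by
  rw [← integral_Ioi_exp_mul a, ← integral_const_mul]
  refine setIntegral_congr_fun measurableSet_Ioi fun t _ => ?_
  unfold stdPdf; ring

lemma integral_Ioi_pdf (a : ℝ) : ∫ t in Ioi a, stdPdf t = 1 - stdNormalCDF a := by
  have h := integral_add_compl (measurableSet_Iic (a := a)) stdPdf_integrable (f := stdPdf)
  rw [compl_Iic, stdPdf_integral, ← cdf_eq] at h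
  linarith

lemma abs_integrand_integrable (μ σ : ℝ) :
    Integrable (fun x : ℝ => stdPdf x * |μ + σ * x|) := by
  have h1 : Integrable (fun x : ℝ => stdPdf x * (μ + σ * x)) := by
    have := (stdPdf_integrable.const_mul μ).add (mul_stdPdf_integrable.const_mul σ)
    refine this.congr ?_
    filter_upwards with x
    simp only [Pi.add_apply]
    ring
  refine h1.abs.congr ?_
  filter_upwards with x
  rw [abs_mul, abs_of_pos (stdPdf_pos x)]

lemma key_pos (μ σ : ℝ) (hμ : 0 ≤ μ) (hσ : 0 < σ) :
    ∫ x, stdPdf x * |μ + σ * x| =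
      μ * (1 - 2 * stdNormalCDF (-(μ / σ))) +
        2 * σ * ((1 / Real.sqrt (2 * π)) * Real.exp (-(-(μ / σ)) ^ 2 / 2)) := by
  set a := -(μ / σ) with ha
  have hsa : σ * a = -μ := by rw [ha]; field_simp
  have hsplit := integral_add_compl (measurableSet_Iic (a := a))
    (abs_integrand_integrable μ σ) (f := fun x : ℝ => stdPdf x * |μ + σ * x|)
  rw [compl_Iic] at hsplit
  have hIic : ∫ x in Iic a, stdPdf x * |μ + σ * x|
      = -μ * stdNormalCDF a - σ * ((1 / Real.sqrt (2 * π)) * (-Real.exp (-a ^ 2 / 2))) := by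
    have hcongr : ∀ x ∈ Iic a, stdPdf x * |μ + σ * x|
        = -μ * stdPdf x + -σ * (x * stdPdf x) := by
      intro x hx
      have hle : μ + σ * x ≤ 0 := by
        have : σ * x ≤ σ * a := mul_le_mul_of_nonneg_left hx hσ.le
        rw [hsa] at this; linarith
      rw [abs_of_nonpos hle]; ring
    rw [setIntegral_congr_fun measurableSet_Iic hcongr, integral_add, integral_const_mul,
      integral_const_mul, integral_Iic_mul_pdf, ← cdf_eq]
    · ring
    · exact (stdPdf_integrable.const_mul _).integrableOn
    · exact (mul_stdPdf_integrable.const_mul _).integrableOn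
  have hIoi : ∫ x in Ioi a, stdPdf x * |μ + σ * x|
      = μ * (1 - stdNormalCDF a) + σ * ((1 / Real.sqrt (2 * π)) * Real.exp (-a ^ 2 / 2)) := by
    have hcongr : ∀ x ∈ Ioi a, stdPdf x * |μ + σ * x|
        = μ * stdPdf x + σ * (x * stdPdf x) := by
      intro x hx
      have hge : 0 ≤ μ + σ * x := by
        have : σ * a ≤ σ * x := mul_le_mul_of_nonneg_left (le_of_lt hx) hσ.le
        rw [hsa] at this; linarith
      rw [abs_of_nonneg hge]; ring
    rw [setIntegral_congr_fun measurableSet_Ioi hcongr, integral_add, integral_const_mul,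
      integral_const_mul, integral_Ioi_mul_pdf, integral_Ioi_pdf]
    · exact (stdPdf_integrable.const_mul _).integrableOn
    · exact (mul_stdPdf_integrable.const_mul _).integrableOn
  rw [hIic, hIoi] at hsplit
  rw [← hsplit]
  ring

lemma refl_int (μ σ : ℝ) :
    ∫ x, stdPdf x * |μ + σ * x| = ∫ x, stdPdf x * |μ - σ * x| := by
  have := integral_neg_eq_self (fun x : ℝ => stdPdf x * |μ - σ * x|) volume
  rw [← this]
  congr 1
  funext x
  have hpdf : stdPdf (-x) = stdPdf x := by unfold stdPdf; rw [neg_pow]; norm_num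
  rw [hpdf, show μ - σ * -x = μ + σ * x by ring]

lemma key (μ σ : ℝ) (hσ : σ ≠ 0) :
    ∫ x, stdPdf x * |μ + σ * x| =
      |μ| * (1 - 2 * stdNormalCDF (-(|μ| / |σ|))) +
        2 * |σ| * ((1 / Real.sqrt (2 * π)) * Real.exp (-(-(|μ| / |σ|)) ^ 2 / 2)) := by
  have habs : ∫ x, stdPdf x * |μ + σ * x| = ∫ x, stdPdf x * abs (|μ| + |σ| * x) := by
    rcases le_or_gt 0 μ with hμ | hμ <;> rcases le_or_gt 0 σ with hs | hs
    · rw [abs_of_nonneg hμ, abs_of_nonneg hs]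
    · rw [refl_int, abs_of_nonneg hμ, abs_of_neg hs]
      congr 1; funext x; congr 1; ring
    · have : ∀ x : ℝ, |μ + σ * x| = |(-μ) + (-σ) * x| := by
        intro x; rw [show (-μ) + (-σ) * x = -(μ + σ * x) by ring, abs_neg]
      simp_rw [this]
      rw [refl_int, abs_of_neg hμ, abs_of_nonneg hs]
      congr 1; funext x; congr 1; ring
    · have : ∀ x : ℝ, |μ + σ * x| = |(-μ) + (-σ) * x| := by
        intro x; rw [show (-μ) + (-σ) * x = -(μ + σ * x) by ring, abs_neg]
      simp_rw [this]
      rw [abs_of_neg hμ, abs_of_neg hs]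
  rw [habs]
  exact key_pos |μ| |σ| (abs_nonneg μ) (abs_pos.2 hσ)

lemma sqrt_two_div_pi : Real.sqrt (2 / π) = 2 / Real.sqrt (2 * π) := by
  rw [show (2:ℝ) / π = 2 ^ 2 / (2 * π) by ring,
    Real.sqrt_div (by positivity) (2 * π), Real.sqrt_sq (by norm_num : (0:ℝ) ≤ 2)]

theorem wasserstein1_gaussians_exact
    (Φinv : ℝ → ℝ) (hΦinv : ∀ q ∈ Ioo (0:ℝ) 1, stdNormalCDF (Φinv q) = q)
    (μ₁ μ₂ σ₁ σ₂ : ℝ) (hσ₁ : 0 < σ₁) (hσ₂ : 0 < σ₂) (hne : σ₁ ≠ σ₂) :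
    ∫ q in Ioo (0:ℝ) 1, |(μ₁ + σ₁ * Φinv q) - (μ₂ + σ₂ * Φinv q)| =
      |μ₁ - μ₂| * (1 - 2 * stdNormalCDF (-(|μ₁ - μ₂| / |σ₁ - σ₂|))) +
        |σ₁ - σ₂| * Real.sqrt (2 / π) *
          Real.exp (-(μ₁ - μ₂) ^ 2 / (2 * (σ₁ - σ₂) ^ 2)) := by
  set μ := μ₁ - μ₂ with hμdef
  set σ := σ₁ - σ₂ with hσdef
  have hσ : σ ≠ 0 := sub_ne_zero.2 hne
  have hinvleft : ∀ t, Φinv (stdNormalCDF t) = t := fun t =>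
    cdf_strictMono.injective (hΦinv _ (cdf_mem_Ioo t))
  have hstep1 : ∀ q : ℝ, |(μ₁ + σ₁ * Φinv q) - (μ₂ + σ₂ * Φinv q)| = |μ + σ * Φinv q| := by
    intro q; congr 1; rw [hμdef, hσdef]; ring
  simp_rw [hstep1]
  have cov : ∫ q in Ioo (0:ℝ) 1, |μ + σ * Φinv q| = ∫ x, stdPdf x * |μ + σ * x| := by
    rw [← cdf_range, ← image_univ,
      integral_image_eq_integral_abs_deriv_smul MeasurableSet.univ
        (fun x _ => (cdf_hasDeriv x).hasDerivWithinAt) cdf_strictMono.injective.injOn]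
    rw [Measure.restrict_univ]
    congr 1
    funext x
    rw [hinvleft, smul_eq_mul, abs_of_pos (stdPdf_pos x)]
  rw [cov, key μ σ hσ]
  have hexp : (-(-(|μ| / |σ|)) ^ 2 / 2 : ℝ) = -μ ^ 2 / (2 * σ ^ 2) := by
    have h2 : (-(|μ| / |σ|)) ^ 2 = μ ^ 2 / σ ^ 2 := by
      rw [neg_sq, div_pow, sq_abs, sq_abs]
    rw [h2]
    field_simp
  rw [hexp, sqrt_two_div_pi]
  have hs : Real.sqrt (2 * π) ≠ 0 := ne_of_gt (Real.sqrt_pos.2 (by positivity))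
  field_simp
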